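/- Let n be a positive integer and T an integer. Then T ∈ 𝒮_4(n) if and only if T ≡ n (mod 2) and 4n − T² ∈ sos(3). In particular, 𝒮'_4(n) = { T ∈ 𝒯_4(n) : 4n − T² ∈ sos(3) }. -/
import Mathlib


/-- `S m n` is the set of integers `T` such that there exist integers
`x₁,…,x_m` with `x₁+⋯+x_m = T` and `x₁²+⋯+x_m² = n`. -/
def S (m n : ℕ) : Set ℤ :=
  {T : ℤ | ∃ x : Fin m → ℤ, (∑ i, x i) = T ∧ (∑ i, (x i) ^ 2) = (n : ℤ)}

/-- `sos m` is the set of integers expressible as a sum of `m` squares of integers. -/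
def sos (m : ℕ) : Set ℤ :=
  {n : ℤ | ∃ a : Fin m → ℤ, (∑ i, (a i) ^ 2) = n}

/-- The binary quadratic form `aX² + 2hXY + bY²` is a sum of `m` squares of
integral linear forms. -/
def IsSumSqLin (m : ℕ) (a h b : ℤ) : Prop :=
  ∃ α β : Fin m → ℤ,
    (∑ i, (α i) ^ 2) = a ∧ (∑ i, α i * β i) = h ∧ (∑ i, (β i) ^ 2) = b

/-- `S m n` is full: every `T` with `T ≡ n (mod 2)` and `T² < mn` lies in `S m n`. -/
def Sfull (m n : ℕ) : Prop :=
  ∀ T : ℤ, T % 2 = (n : ℤ) % 2 → T ^ 2 < (m : ℤ) * n → T ∈ S m n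

/-- The residue of `z²` modulo 8 is determined by `z` modulo 4. -/
lemma sq_mod8 (z : ℤ) :
    (z % 4 = 0 ∧ z ^ 2 % 8 = 0) ∨ (z % 4 = 1 ∧ z ^ 2 % 8 = 1) ∨
    (z % 4 = 2 ∧ z ^ 2 % 8 = 4) ∨ (z % 4 = 3 ∧ z ^ 2 % 8 = 1) := by
  obtain ⟨q, r, hz, hr⟩ : ∃ q r, z = 4 * q + r ∧ (r = 0 ∨ r = 1 ∨ r = 2 ∨ r = 3) :=
    ⟨z / 4, z % 4, by omega, by omega⟩
  rcases hr with h | h | h | h <;> subst h <;> subst hz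
  · left; exact ⟨by omega, by
      rw [show (4*q+(0:ℤ))^2 = 0 + 8*(2*q^2) by ring, Int.add_mul_emod_self_left]; norm_num⟩
  · right; left; exact ⟨by omega, by
      rw [show (4*q+(1:ℤ))^2 = 1 + 8*(2*q^2+q) by ring, Int.add_mul_emod_self_left]; norm_num⟩
  · right; right; left; exact ⟨by omega, by
      rw [show (4*q+(2:ℤ))^2 = 4 + 8*(2*q^2+2*q) by ring, Int.add_mul_emod_self_left]; norm_num⟩
  · right; right; right; exact ⟨by omega, by
      rw [show (4*q+(3:ℤ))^2 = 1 + 8*(2*q^2+3*q+1) by ring, Int.add_mul_emod_self_left]; norm_num⟩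

lemma sq_mod2 (z : ℤ) : z ^ 2 % 2 = z % 2 := by
  have := sq_mod8 z; omega

/-- Key construction: if `T² + p² + q² + r² = 4n` with suitable congruence
conditions, then `T ∈ S 4 n` via `a = (T+p+q+r)/4` etc. -/
lemma construct (n : ℕ) (T p q r : ℤ)
    (h : T ^ 2 + p ^ 2 + q ^ 2 + r ^ 2 = 4 * (n : ℤ))
    (h4 : (T + p + q + r) % 4 = 0) (hq : p % 2 = q % 2) (hr : p % 2 = r % 2) :
    T ∈ S 4 n := by
  obtain ⟨a, b, c, d, e1, e2, e3, e4⟩ :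
      ∃ a b c d : ℤ, a + b + c + d = T ∧ a + b - c - d = p ∧
        a - b + c - d = q ∧ a - b - c + d = r :=
    ⟨(T+p+q+r)/4, (T+p-q-r)/4, (T-p+q-r)/4, (T-p-q+r)/4,
      by omega, by omega, by omega, by omega⟩
  refine ⟨![a, b, c, d], ?_, ?_⟩
  · simp [Fin.sum_univ_four]; linarith
  · simp only [Fin.sum_univ_four, Matrix.cons_val_zero, Matrix.cons_val_one, Matrix.head_cons,
      Matrix.cons_val_two, Matrix.tail_cons, Matrix.cons_val_three]
    have key : 4 * (a^2 + b^2 + c^2 + d^2) = 4 * (n:ℤ) := by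
      linear_combination h + (a+b+c+d+T)*e1 + (a+b-c-d+p)*e2 + (a-b+c-d+q)*e3 + (a-b-c+d+r)*e4
    linarith

set_option maxHeartbeats 2000000 in
theorem stmt10 (n : ℕ) (hn : 0 < n) :
    (∀ T : ℤ, T ∈ S 4 n ↔
      (T % 2 = (n : ℤ) % 2 ∧ (4 * (n : ℤ) - T ^ 2) ∈ sos 3)) ∧
    ({T : ℤ | T ∈ S 4 n ∧ T ^ 2 < 4 * (n : ℤ)} =
      {T : ℤ | (T % 2 = (n : ℤ) % 2 ∧ T ^ 2 < 4 * (n : ℤ)) ∧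
        (4 * (n : ℤ) - T ^ 2) ∈ sos 3}) := by
  have main : ∀ T : ℤ, T ∈ S 4 n ↔
      (T % 2 = (n : ℤ) % 2 ∧ (4 * (n : ℤ) - T ^ 2) ∈ sos 3) := by
    intro T
    constructor
    · rintro ⟨x, hs, hsq⟩
      rw [Fin.sum_univ_four] at hs hsq
      set a := x 0; set b := x 1; set c := x 2; set d := x 3
      constructor
      · have h1 := sq_mod2 a; have h2 := sq_mod2 b
        have h3 := sq_mod2 c; have h4 := sq_mod2 d
        omega
      · refine ⟨![a+b-c-d, a-b+c-d, a-b-c+d], ?_⟩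
        simp only [Fin.sum_univ_three, Matrix.cons_val_zero, Matrix.cons_val_one,
          Matrix.head_cons, Matrix.cons_val_two, Matrix.tail_cons]
        linear_combination 4 * hsq - (T + a + b + c + d) * hs
    · rintro ⟨hpar, y, hy⟩
      rw [Fin.sum_univ_three] at hy
      set p := y 0; set q := y 1; set r := y 2
      have h : T ^ 2 + p ^ 2 + q ^ 2 + r ^ 2 = 4 * (n : ℤ) := by linarith
      have hT := sq_mod8 T; have hp := sq_mod8 p
      have hq := sq_mod8 q; have hr := sq_mod8 r
      have key : (p % 2 = q % 2 ∧ p % 2 = r % 2) ∧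
          ((T + p + q + r) % 4 = 0 ∨ (T + (-p) + q + r) % 4 = 0) := by omega
      obtain ⟨⟨hq2, hr2⟩, h4 | h4⟩ := key
      · exact construct n T p q r h h4 hq2 hr2
      · refine construct n T (-p) q r (by linear_combination h) h4 ?_ ?_ <;> omega
  refine ⟨main, ?_⟩
  ext T
  simp only [Set.mem_setOf_eq, main T]
  tauto
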